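/- Let n ∈ ℕ, let ℓ : Fin n → ℝ, let w : Fin n → ℝ with w_i ≥ 0 for all i, and let σ > 0. Then (1/(√(2π)·σ)) ∫_ℝ |∑_{i} w_i e^{i ℓ_i ξ}|² e^{−ξ²/(2σ²)} dξ ≥ ∑_{v ∈ ℓ(Fin n)} ( ∑_{i : ℓ_i = v} w_i )², where the outer sum on the right runs over the (finite) set of values attained by ℓ. In particular the left-hand side is at least ∑_i w_i². -/

import Mathlib

open Complex Real MeasureTheory

lemma gauss_cos_integral (b a : ℝ) (hb : 0 < b) :
    ∫ x : ℝ, Real.cos (a * x) * Real.exp (-b * x ^ 2) =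
      Real.sqrt (π / b) * Real.exp (-a ^ 2 / (4 * b)) := by
  have hbc : (0:ℝ) < ((b:ℂ)).re := by simpa using hb
  have hF := fourierIntegral_gaussian hbc (a : ℂ)
  have hint : Integrable (fun x : ℝ => Complex.exp (I * (a:ℂ) * x) * Complex.exp (-(b:ℂ) * x ^ 2)) := by
    have h := integrable_cexp_quadratic hbc (I * (a:ℂ)) 0
    refine h.congr (Filter.Eventually.of_forall fun x => ?_)
    simp only [← Complex.exp_add]
    ring_nf
  have hre : ∀ x : ℝ, (Complex.exp (I * (a:ℂ) * x) * Complex.exp (-(b:ℂ) * x ^ 2)).re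
      = Real.cos (a * x) * Real.exp (-b * x ^ 2) := by
    intro x
    rw [show (I * (a:ℂ) * x) = ((a * x : ℝ) : ℂ) * I by push_cast; ring,
      show (-(b:ℂ) * (x:ℂ) ^ 2) = ((-b * x ^ 2 : ℝ) : ℂ) by push_cast; ring,
      ← Complex.ofReal_exp, Complex.mul_re]
    simp only [Complex.ofReal_re, Complex.ofReal_im, mul_zero, sub_zero,
      Complex.exp_ofReal_mul_I_re]
  calc ∫ x : ℝ, Real.cos (a * x) * Real.exp (-b * x ^ 2)
      = ∫ x : ℝ, (Complex.exp (I * (a:ℂ) * x) * Complex.exp (-(b:ℂ) * x ^ 2)).re := by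
        simp_rw [hre]
    _ = (∫ x : ℝ, Complex.exp (I * (a:ℂ) * x) * Complex.exp (-(b:ℂ) * x ^ 2)).re :=
        integral_re hint
    _ = Real.sqrt (π / b) * Real.exp (-a ^ 2 / (4 * b)) := by
        rw [hF]
        rw [show (((π:ℂ)) / (b:ℂ)) = ((π / b : ℝ) : ℂ) by push_cast; ring,
          show (-(a:ℂ) ^ 2 / (4 * (b:ℂ))) = ((-a ^ 2 / (4 * b) : ℝ) : ℂ) by push_cast; ring,
          ← Complex.ofReal_exp,
          show ((1/2 : ℂ)) = (((1/2 : ℝ)) : ℂ) by norm_num,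
          ← Complex.ofReal_cpow (by positivity : (0:ℝ) ≤ π / b),
          ← Complex.ofReal_mul, Complex.ofReal_re, Real.sqrt_eq_rpow]

/-- Diagonal lower bound for the Gaussian average of the squared modulus of an
exponential sum with nonnegative weights; in particular it is at least `∑ wᵢ²`. -/
theorem gaussian_average_diagonal_lower_bound
    (n : ℕ) (ℓ w : Fin n → ℝ) (hw : ∀ i, 0 ≤ w i) (σ : ℝ) (hσ : 0 < σ) :
    (∑ v ∈ Finset.image ℓ Finset.univ,
        (∑ i ∈ Finset.univ.filter (fun i => ℓ i = v), w i) ^ 2 ≤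
      (1 / (Real.sqrt (2 * Real.pi) * σ)) *
        ∫ ξ : ℝ, (‖∑ i, (w i : ℂ) * Complex.exp (Complex.I * ℓ i * ξ)‖) ^ 2 *
          Real.exp (-ξ ^ 2 / (2 * σ ^ 2))) ∧
    (∑ i, w i ^ 2 ≤
      (1 / (Real.sqrt (2 * Real.pi) * σ)) *
        ∫ ξ : ℝ, (‖∑ i, (w i : ℂ) * Complex.exp (Complex.I * ℓ i * ξ)‖) ^ 2 *
          Real.exp (-ξ ^ 2 / (2 * σ ^ 2))) := by
  set b : ℝ := 1 / (2 * σ ^ 2) with hbdef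
  have hb : 0 < b := by positivity
  -- pointwise expansion
  have expand : ∀ ξ : ℝ,
      (‖∑ i, (w i : ℂ) * Complex.exp (Complex.I * ℓ i * ξ)‖) ^ 2 *
          Real.exp (-ξ ^ 2 / (2 * σ ^ 2))
        = ∑ i, ∑ j, w i * w j * (Real.cos ((ℓ i - ℓ j) * ξ) * Real.exp (-b * ξ ^ 2)) := by
    intro ξ
    have habs : (‖∑ i, (w i : ℂ) * Complex.exp (Complex.I * ℓ i * ξ)‖) ^ 2
        = ∑ i, ∑ j, w i * w j * Real.cos ((ℓ i - ℓ j) * ξ) := by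
      set S : ℂ := ∑ i, (w i : ℂ) * Complex.exp (Complex.I * ℓ i * ξ) with hS
      have h1 : (‖S‖) ^ 2 = (S * (starRingEnd ℂ) S).re := by
        rw [Complex.mul_conj, Complex.sq_norm, Complex.ofReal_re]
      rw [h1, hS, map_sum, Finset.sum_mul_sum, Complex.re_sum]
      refine Finset.sum_congr rfl fun i _ => ?_
      rw [Complex.re_sum]
      refine Finset.sum_congr rfl fun j _ => ?_
      have h2 : (w i : ℂ) * Complex.exp (Complex.I * ℓ i * ξ) *
          ((starRingEnd ℂ) ((w j : ℂ) * Complex.exp (Complex.I * ℓ j * ξ)))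
          = ((w i * w j : ℝ) : ℂ) * Complex.exp (((ℓ i - ℓ j) * ξ : ℝ) * Complex.I) := by
        rw [map_mul, ← Complex.exp_conj, Complex.conj_ofReal,
          show (starRingEnd ℂ) (Complex.I * ℓ j * ξ) = -(Complex.I * ℓ j * ξ) by
            simp [map_mul, Complex.conj_ofReal]]
        rw [mul_mul_mul_comm, ← Complex.exp_add]
        push_cast
        ring_nf
      rw [h2, Complex.re_ofReal_mul, Complex.exp_ofReal_mul_I_re]
    have hg : Real.exp (-ξ ^ 2 / (2 * σ ^ 2)) = Real.exp (-b * ξ ^ 2) := by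
      congr 1
      rw [hbdef]
      field_simp
    rw [habs, hg, Finset.sum_mul]
    refine Finset.sum_congr rfl fun i _ => ?_
    rw [Finset.sum_mul]
    exact Finset.sum_congr rfl fun j _ => by ring
  -- integrability of each term
  have hterm_int : ∀ a : ℝ, Integrable (fun ξ : ℝ =>
      Real.cos (a * ξ) * Real.exp (-b * ξ ^ 2)) := by
    intro a
    refine (integrable_exp_neg_mul_sq hb).bdd_mul ?_ (c := 1) (Filter.Eventually.of_forall fun ξ => ?_)
    · exact (Real.continuous_cos.comp (continuous_const.mul continuous_id)).aestronglyMeasurable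
    · simpa using Real.abs_cos_le_one (a * ξ)
  -- the integral identity
  have hI : ∫ ξ : ℝ, (‖∑ i, (w i : ℂ) * Complex.exp (Complex.I * ℓ i * ξ)‖) ^ 2 *
        Real.exp (-ξ ^ 2 / (2 * σ ^ 2))
      = Real.sqrt (π / b) * ∑ i, ∑ j, w i * w j * Real.exp (-(ℓ i - ℓ j) ^ 2 / (4 * b)) := by
    calc ∫ ξ : ℝ, (‖∑ i, (w i : ℂ) * Complex.exp (Complex.I * ℓ i * ξ)‖) ^ 2 *
          Real.exp (-ξ ^ 2 / (2 * σ ^ 2))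
        = ∫ ξ : ℝ, ∑ i, ∑ j, w i * w j * (Real.cos ((ℓ i - ℓ j) * ξ) * Real.exp (-b * ξ ^ 2)) := by
          simp_rw [expand]
      _ = ∑ i, ∑ j, ∫ ξ : ℝ, w i * w j * (Real.cos ((ℓ i - ℓ j) * ξ) * Real.exp (-b * ξ ^ 2)) := by
          rw [integral_finset_sum _ (fun i _ =>
            integrable_finset_sum _ (fun j _ => (hterm_int (ℓ i - ℓ j)).const_mul _))]
          exact Finset.sum_congr rfl fun i _ => integral_finset_sum _
            (fun j _ => (hterm_int (ℓ i - ℓ j)).const_mul _)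
      _ = ∑ i, ∑ j, w i * w j *
            (Real.sqrt (π / b) * Real.exp (-(ℓ i - ℓ j) ^ 2 / (4 * b))) := by
          refine Finset.sum_congr rfl fun i _ => Finset.sum_congr rfl fun j _ => ?_
          rw [integral_const_mul, gauss_cos_integral b (ℓ i - ℓ j) hb]
      _ = Real.sqrt (π / b) * ∑ i, ∑ j, w i * w j * Real.exp (-(ℓ i - ℓ j) ^ 2 / (4 * b)) := by
          rw [Finset.mul_sum]
          refine Finset.sum_congr rfl fun i _ => ?_
          rw [Finset.mul_sum]
          exact Finset.sum_congr rfl fun j _ => by ring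
  -- the constant simplifies
  have hsqrt : Real.sqrt (π / b) = Real.sqrt (2 * π) * σ := by
    rw [show π / b = (2 * π) * σ ^ 2 by rw [hbdef]; field_simp]
    rw [Real.sqrt_mul (by positivity), Real.sqrt_sq hσ.le]
  have hav : (1 / (Real.sqrt (2 * Real.pi) * σ)) *
      ∫ ξ : ℝ, (‖∑ i, (w i : ℂ) * Complex.exp (Complex.I * ℓ i * ξ)‖) ^ 2 *
        Real.exp (-ξ ^ 2 / (2 * σ ^ 2))
      = ∑ i, ∑ j, w i * w j * Real.exp (-(ℓ i - ℓ j) ^ 2 / (4 * b)) := by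
    rw [hI, hsqrt, ← mul_assoc]
    have hne : Real.sqrt (2 * π) * σ ≠ 0 := by positivity
    rw [one_div, inv_mul_cancel₀ hne, one_mul]
  -- the fiberwise identity
  have fib : ∑ v ∈ Finset.image ℓ Finset.univ,
      (∑ i ∈ Finset.univ.filter (fun i => ℓ i = v), w i) ^ 2
      = ∑ i, ∑ j, w i * w j * (if ℓ j = ℓ i then 1 else 0) := by
    calc ∑ v ∈ Finset.image ℓ Finset.univ,
        (∑ i ∈ Finset.univ.filter (fun i => ℓ i = v), w i) ^ 2
        = ∑ v ∈ Finset.image ℓ Finset.univ, ∑ i ∈ Finset.univ.filter (fun i => ℓ i = v),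
            (w i * ∑ j ∈ Finset.univ.filter (fun j => ℓ j = ℓ i), w j) := by
          refine Finset.sum_congr rfl fun v _ => ?_
          rw [sq, Finset.sum_mul]
          refine Finset.sum_congr rfl fun i hi => ?_
          rw [(Finset.mem_filter.1 hi).2]
      _ = ∑ i, w i * ∑ j ∈ Finset.univ.filter (fun j => ℓ j = ℓ i), w j :=
          Finset.sum_fiberwise_of_maps_to
            (fun i _ => Finset.mem_image_of_mem ℓ (Finset.mem_univ i)) _
      _ = ∑ i, ∑ j, w i * w j * (if ℓ j = ℓ i then 1 else 0) := by
          refine Finset.sum_congr rfl fun i _ => ?_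
          rw [Finset.sum_filter, Finset.mul_sum]
          refine Finset.sum_congr rfl fun j _ => ?_
          by_cases h : ℓ j = ℓ i <;> simp [h]
  -- first inequality
  have main : ∑ v ∈ Finset.image ℓ Finset.univ,
      (∑ i ∈ Finset.univ.filter (fun i => ℓ i = v), w i) ^ 2 ≤
      (1 / (Real.sqrt (2 * Real.pi) * σ)) *
        ∫ ξ : ℝ, (‖∑ i, (w i : ℂ) * Complex.exp (Complex.I * ℓ i * ξ)‖) ^ 2 *
          Real.exp (-ξ ^ 2 / (2 * σ ^ 2)) := by
    rw [hav, fib]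
    refine Finset.sum_le_sum fun i _ => Finset.sum_le_sum fun j _ => ?_
    by_cases h : ℓ j = ℓ i
    · rw [if_pos h, h, sub_self]
      norm_num
    · rw [if_neg h]
      have := Real.exp_pos (-(ℓ i - ℓ j) ^ 2 / (4 * b))
      have := mul_nonneg (hw i) (hw j)
      nlinarith
  refine ⟨main, le_trans ?_ main⟩
  -- ∑ wᵢ² ≤ fiberwise sum of squares
  calc ∑ i, w i ^ 2
      = ∑ v ∈ Finset.image ℓ Finset.univ,
          ∑ i ∈ Finset.univ.filter (fun i => ℓ i = v), w i ^ 2 :=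
        (Finset.sum_fiberwise_of_maps_to
          (fun i _ => Finset.mem_image_of_mem ℓ (Finset.mem_univ i)) _).symm
    _ ≤ ∑ v ∈ Finset.image ℓ Finset.univ,
          (∑ i ∈ Finset.univ.filter (fun i => ℓ i = v), w i) ^ 2 :=
        Finset.sum_le_sum fun v _ =>
          Finset.sum_sq_le_sq_sum_of_nonneg fun i _ => hw i
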